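/- Let T=(V,E) be a finite tree with positive edge weights and shortest-path metric d. For a vertex u with neighbor set N(u) and for w∈N(u), let C_{T∖(u,w)}(w) denote the vertex set of the connected component of T with edge (u,w) removed that contains w. Let u^f∈N(u) be a furthest neighbor of u, i.e., the average distance from u to C_{T∖(u,u^f)}(u^f) is at least the average distance from u to C_{T∖(u,w)}(w) for every w∈N(u). Then in the 2-clustering of V given by the two components of T with edge (u,u^f) removed, the vertex u is IP-stable: the average distance from u to the other vertices of its own component is at most the average distance from u to the vertices of the component containing u^f. -/

import Mathlib

open Finset

open scoped Classical in
/-- The shortest-path (tree) metric induced on the vertices of a tree `G` with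
edge weights `w`: the total weight of the unique path between two vertices. -/
noncomputable def treeDist {V : Type*} (G : SimpleGraph V) (hG : G.IsTree)
    (w : Sym2 V → ℝ) (u v : V) : ℝ :=
  (((hG.existsUnique_path u v).exists.choose).edges.map w).sum

open scoped Classical in
/-- The vertex set of the connected component containing `z` after removing the
edge `s(u, z)` from `G`. -/
noncomputable def compAfterDelete {V : Type*} [Fintype V]
    (G : SimpleGraph V) (u z : V) : Finset V :=
  Finset.univ.filter fun x => (G.deleteEdges {s(u, z)}).Reachable z x

open SimpleGraph

section Aux

variable {V : Type*} (G : SimpleGraph V) (hG : G.IsTree)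

/-- The canonical path between two vertices of a tree. -/
noncomputable def thePath (a b : V) : G.Walk a b :=
  (hG.existsUnique_path a b).exists.choose

lemma thePath_isPath (a b : V) : (thePath G hG a b).IsPath :=
  (hG.existsUnique_path a b).exists.choose_spec

lemma thePath_unique {a b : V} (p : G.Walk a b) (hp : p.IsPath) :
    p = thePath G hG a b :=
  (hG.existsUnique_path a b).unique hp (thePath_isPath G hG a b)

lemma treeDist_eq (w : Sym2 V → ℝ) (a b : V) :
    treeDist G hG w a b = ((thePath G hG a b).edges.map w).sum := rfl

lemma treeDist_nonneg (w : Sym2 V → ℝ) (hw : ∀ e ∈ G.edgeSet, 0 < w e) (a b : V) :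
    0 ≤ treeDist G hG w a b := by
  rw [treeDist_eq]
  apply List.sum_nonneg
  intro x hx
  obtain ⟨e, he, rfl⟩ := List.mem_map.1 hx
  exact le_of_lt (hw e ((thePath G hG a b).edges_subset_edgeSet he))

lemma treeDist_self (w : Sym2 V → ℝ) (a : V) : treeDist G hG w a a = 0 := by
  rw [treeDist_eq, ← thePath_unique G hG (SimpleGraph.Walk.nil) SimpleGraph.Walk.IsPath.nil]
  simp

lemma reachable_delete_iff (e : Sym2 V) (a b : V) :
    (G.deleteEdges {e}).Reachable a b ↔ e ∉ (thePath G hG a b).edges := by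
  classical
  constructor
  · rintro ⟨q⟩
    have hq1 : q.bypass.IsPath := q.bypass_isPath
    have hsub : ∀ f ∈ q.bypass.edges, f ∈ G.edgeSet := by
      intro f hf
      have := q.bypass.edges_subset_edgeSet hf
      rw [G.edgeSet_deleteEdges] at this
      exact this.1
    have hq2 : (q.bypass.transfer G hsub).IsPath := hq1.transfer hsub
    rw [← thePath_unique G hG _ hq2, SimpleGraph.Walk.edges_transfer]
    intro he
    have := q.bypass.edges_subset_edgeSet he
    rw [G.edgeSet_deleteEdges] at this
    exact this.2 rfl
  · intro h
    exact ⟨(thePath G hG a b).toDeleteEdges {e} (by rintro f hf rfl; exact h hf)⟩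

end Aux

section Struct

variable {V : Type*} [Fintype V] [DecidableEq V] (G : SimpleGraph V) (hG : G.IsTree)

set_option linter.unusedSectionVars false

lemma mem_compAfterDelete_iff (a z x : V) :
    x ∈ compAfterDelete G a z ↔ (G.deleteEdges {s(a, z)}).Reachable z x := by
  simp [compAfterDelete]

lemma self_mem_compAfterDelete (a z : V) : z ∈ compAfterDelete G a z :=
  (mem_compAfterDelete_iff G a z z).2 (SimpleGraph.Reachable.refl z)

include hG in
lemma thePath_adj {a b : V} (h : G.Adj a b) :
    thePath G hG a b = SimpleGraph.Walk.cons h SimpleGraph.Walk.nil := by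
  refine (thePath_unique G hG _ ?_).symm
  rw [SimpleGraph.Walk.cons_isPath_iff]
  exact ⟨SimpleGraph.Walk.IsPath.nil, by simp [h.ne]⟩

include hG in
lemma not_mem_compAfterDelete {a z : V} (h : G.Adj a z) :
    a ∉ compAfterDelete G a z := by
  rw [mem_compAfterDelete_iff, reachable_delete_iff G hG, thePath_adj G hG h.symm]
  simp [Sym2.eq_swap]

include hG in
lemma key_lemma {u y : V} (hne : y ≠ u) :
    ∃ z₀, G.Adj u z₀ ∧
      (∀ z, G.Adj u z → (y ∈ compAfterDelete G u z ↔ z = z₀)) ∧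
      (∀ z, ((G.deleteEdges {s(z, u)}).Reachable u y ↔ z ≠ z₀)) := by
  have hp := thePath_isPath G hG u y
  have hnn : ¬ (thePath G hG u y).Nil := SimpleGraph.Walk.not_nil_of_ne (Ne.symm hne)
  obtain ⟨z₀, hadj, q, hq⟩ := SimpleGraph.Walk.not_nil_iff.1 hnn
  rw [hq, SimpleGraph.Walk.cons_isPath_iff] at hp
  obtain ⟨hqp, husup⟩ := hp
  have hqeq : q = thePath G hG z₀ y := thePath_unique G hG q hqp
  refine ⟨z₀, hadj, ?_, ?_⟩
  · intro z hz
    rw [mem_compAfterDelete_iff, reachable_delete_iff G hG]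
    constructor
    · intro h
      by_cases hu : u ∈ (thePath G hG z y).support
      · exfalso
        have htk : ((thePath G hG z y).takeUntil u hu).IsPath :=
          (thePath_isPath G hG z y).takeUntil _
        have htkeq := thePath_unique G hG _ htk
        have hedge : s(z, u) ∈ ((thePath G hG z y).takeUntil u hu).edges := by
          rw [htkeq, thePath_adj G hG hz.symm]; simp
        have hmem := (thePath G hG z y).edges_takeUntil_subset hu hedge
        rw [Sym2.eq_swap] at hmem
        exact h hmem
      · have hpath : (SimpleGraph.Walk.cons hz (thePath G hG z y)).IsPath := by
          rw [SimpleGraph.Walk.cons_isPath_iff]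
          exact ⟨thePath_isPath G hG z y, hu⟩
        have heq := thePath_unique G hG _ hpath
        rw [hq] at heq
        have h2 := congrArg SimpleGraph.Walk.support heq
        rw [SimpleGraph.Walk.support_cons, SimpleGraph.Walk.support_cons,
          (thePath G hG z y).support_eq_cons, q.support_eq_cons] at h2
        simp only [List.cons.injEq] at h2
        exact h2.2.1
    · rintro rfl
      rw [← hqeq]
      intro hmem
      exact husup (q.fst_mem_support_of_mem_edges hmem)
  · intro z
    rw [reachable_delete_iff G hG, hq, SimpleGraph.Walk.edges_cons]
    constructor
    · intro h hzz
      subst hzz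
      exact h (by rw [Sym2.eq_swap]; exact List.mem_cons_self)
    · intro hzz hmem
      rcases List.mem_cons.1 hmem with h1 | h2
      · rw [Sym2.eq_iff] at h1
        rcases h1 with ⟨rfl, rfl⟩ | ⟨h3, -⟩
        · exact hadj.ne rfl
        · exact hzz h3
      · exact husup (q.snd_mem_support_of_mem_edges h2)

end Struct

/-- in a finite tree with positive edge weights, if `u^f` is a
furthest neighbor of `u` (the average distance from `u` to the component of
`u^f` obtained by deleting the edge `(u, u^f)` is at least the corresponding
average for every neighbor `w` of `u`), then `u` is IP-stable in the
2-clustering given by the two components of `T` with the edge `(u, u^f)`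
removed: the average distance from `u` to the other vertices of its own
component is at most the average distance from `u` to the vertices of the
component of `u^f`. -/
theorem rotate_makes_u_stable
    {V : Type*} [Fintype V] [DecidableEq V]
    (G : SimpleGraph V) (hG : G.IsTree)
    (w : Sym2 V → ℝ) (hw : ∀ e ∈ G.edgeSet, 0 < w e)
    (u uf : V) (huf : G.Adj u uf)
    (hfar : ∀ z : V, G.Adj u z →
      (∑ y ∈ compAfterDelete G u z, treeDist G hG w u y) /
          ((compAfterDelete G u z).card : ℝ) ≤
        (∑ y ∈ compAfterDelete G u uf, treeDist G hG w u y) /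
          ((compAfterDelete G u uf).card : ℝ)) :
    (∑ y ∈ compAfterDelete G uf u, treeDist G hG w u y) /
        (((compAfterDelete G uf u).card : ℝ) - 1) ≤
      (∑ y ∈ compAfterDelete G u uf, treeDist G hG w u y) /
        ((compAfterDelete G u uf).card : ℝ) := by
  classical
  set A := compAfterDelete G u uf with hA
  set B := compAfterDelete G uf u with hB
  set Nf := (Finset.univ.filter fun z => G.Adj u z ∧ z ≠ uf) with hNf
  set M := (∑ y ∈ A, treeDist G hG w u y) / ((A.card : ℝ)) with hMdef
  have hdnn : ∀ y, 0 ≤ treeDist G hG w u y := treeDist_nonneg G hG w hw u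
  have hAuf : uf ∈ A := self_mem_compAfterDelete G u uf
  have hM : 0 ≤ M :=
    div_nonneg (Finset.sum_nonneg fun y _ => hdnn y)
      (by positivity)
  have hBu : u ∈ B := self_mem_compAfterDelete G uf u
  have hdisj : ∀ z ∈ Nf, ∀ z' ∈ Nf, z ≠ z' →
      Disjoint (compAfterDelete G u z) (compAfterDelete G u z') := by
    intro z hz z' hz' hne
    rw [hNf, Finset.mem_filter] at hz hz'
    rw [Finset.disjoint_left]
    intro y hy hy'
    have hyu : y ≠ u := fun h => not_mem_compAfterDelete G hG hz.2.1 (h ▸ hy)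
    obtain ⟨z₀, hz₀, h1, -⟩ := key_lemma G hG hyu
    exact hne (((h1 z hz.2.1).1 hy).trans ((h1 z' hz'.2.1).1 hy').symm)
  have hdecomp : B.erase u = Nf.biUnion (fun z => compAfterDelete G u z) := by
    ext y
    simp only [Finset.mem_erase, Finset.mem_biUnion, hNf, Finset.mem_filter,
      Finset.mem_univ, true_and]
    constructor
    · rintro ⟨hyu, hyB⟩
      obtain ⟨z₀, hz₀, h1, h2⟩ := key_lemma G hG hyu
      have hr : (G.deleteEdges {s(uf, u)}).Reachable u y :=
        (mem_compAfterDelete_iff G uf u y).1 hyB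
      have hufz : uf ≠ z₀ := (h2 uf).1 hr
      exact ⟨z₀, ⟨hz₀, fun h => hufz h.symm⟩, (h1 z₀ hz₀).2 rfl⟩
    · rintro ⟨z, ⟨hz, hzuf⟩, hyz⟩
      have hyu : y ≠ u := fun h => not_mem_compAfterDelete G hG hz (h ▸ hyz)
      obtain ⟨z₀, hz₀, h1, h2⟩ := key_lemma G hG hyu
      have hzz0 : z = z₀ := (h1 z hz).1 hyz
      refine ⟨hyu, ?_⟩
      rw [hB, mem_compAfterDelete_iff]
      exact (h2 uf).2 (fun h => hzuf (h.trans hzz0.symm).symm)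
  have hnum : ∑ y ∈ B, treeDist G hG w u y
      = ∑ z ∈ Nf, ∑ y ∈ compAfterDelete G u z, treeDist G hG w u y := by
    rw [← Finset.add_sum_erase _ _ hBu, treeDist_self, zero_add, hdecomp,
      Finset.sum_biUnion]
    intro z hz z' hz' hne
    exact hdisj z hz z' hz' hne
  have hden : (B.card : ℝ) - 1 = ∑ z ∈ Nf, ((compAfterDelete G u z).card : ℝ) := by
    have h1 : (B.erase u).card = B.card - 1 := Finset.card_erase_of_mem hBu
    have h2 : (B.erase u).card = ∑ z ∈ Nf, (compAfterDelete G u z).card := by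
      rw [hdecomp]; exact Finset.card_biUnion hdisj
    have hc : 1 ≤ B.card := Finset.card_pos.2 ⟨u, hBu⟩
    rw [show ((B.card : ℝ) - 1) = ((B.card - 1 : ℕ) : ℝ) from by
      rw [Nat.cast_sub hc]; simp]
    rw [← h1, h2]
    push_cast
    rfl
  rw [hnum, hden]
  have hbound : ∑ z ∈ Nf, ∑ y ∈ compAfterDelete G u z, treeDist G hG w u y
      ≤ M * ∑ z ∈ Nf, ((compAfterDelete G u z).card : ℝ) := by
    rw [Finset.mul_sum]
    apply Finset.sum_le_sum
    intro z hz
    rw [hNf, Finset.mem_filter] at hz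
    have hzA : G.Adj u z := hz.2.1
    have hcz : (0 : ℝ) < (compAfterDelete G u z).card := by
      exact_mod_cast Finset.card_pos.2 ⟨z, self_mem_compAfterDelete G u z⟩
    have := hfar z hzA
    calc ∑ y ∈ compAfterDelete G u z, treeDist G hG w u y
        = (∑ y ∈ compAfterDelete G u z, treeDist G hG w u y) /
            ((compAfterDelete G u z).card : ℝ) * ((compAfterDelete G u z).card : ℝ) := by
          field_simp
      _ ≤ M * ((compAfterDelete G u z).card : ℝ) :=
          mul_le_mul_of_nonneg_right this hcz.le
  have hDnn : (0:ℝ) ≤ ∑ z ∈ Nf, ((compAfterDelete G u z).card : ℝ) :=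
    Finset.sum_nonneg fun z _ => Nat.cast_nonneg _
  rcases hDnn.eq_or_lt with hD | hD
  · rw [← hD, div_zero]; exact hM
  · exact (div_le_iff₀ hD).2 hbound
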